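/- Let l ≥ 1 and let k₁,…,k_l be positive integers, with indices of k_j read modulo l. Then ∑_{j=1}^{l} (ρ̄₀ ∘ α ∘ d)(z_{k_j} z_{k_{j+1}} ⋯ z_{k_{j+l−1}}) = ∑_{j=1}^{l} ∑_{i=1}^{k_j−1} z_{k_j−i+1} z_{k_{j+1}} ⋯ z_{k_{j+l−1}} z_i − (k₁ + ⋯ + k_l) · z_{k₁+⋯+k_l+1}, as an identity in H. -/

import Mathlib

noncomputable section

open Finset

/-- Hoffman's algebra `H = ℚ⟨x,y⟩`, the noncommutative polynomial algebra
over `ℚ` in two indeterminates. -/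
abbrev H : Type := FreeAlgebra ℚ (Fin 2)

/-- The indeterminate `x`. -/
def Hx : H := FreeAlgebra.ι ℚ 0

/-- The indeterminate `y`. -/
def Hy : H := FreeAlgebra.ι ℚ 1

/-- `z = x + y`. -/
def Hz : H := Hx + Hy

/-- `z_k = x^(k-1) y`. -/
def zw (k : ℕ) : H := Hx ^ (k - 1) * Hy

/-- The monomial `z_{k 0} z_{k 1} ⋯ z_{k (l-1)}`. -/
def zwords {l : ℕ} (k : Fin l → ℕ) : H := (List.ofFn fun i => zw (k i)).prod

/-- The monomial `z_{k a} z_{k (a+1)} ⋯ z_{k (a+l-1)}`. -/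
def zseq (k : ℕ → ℕ) (a l : ℕ) : H := ((List.range l).map fun t => zw (k (a + t))).prod

/-- `Ȟ¹`: the ℚ-span of the monomials `z_{k₁}⋯z_{k_l}` over tuples of positive
integers not all equal to 1. -/
def Hcheck : Submodule ℚ H :=
  Submodule.span ℚ
    {w | ∃ (l : ℕ) (k : Fin (l + 1) → ℕ), (∀ i, 1 ≤ k i) ∧ (∃ i, k i ≠ 1) ∧ w = zwords k}

/-- `Ȟ¹_d`: the subspace of `Ȟ¹` spanned by the monomials of total degree `d`. -/
def HcheckDeg (d : ℕ) : Submodule ℚ H :=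
  Submodule.span ℚ
    {w | ∃ (l : ℕ) (k : Fin (l + 1) → ℕ),
      (∀ i, 1 ≤ k i) ∧ (∃ i, k i ≠ 1) ∧ (∑ i, k i) = d ∧ w = zwords k}

/-- `H⁰_d`: the span of the monomials `z_{k₁}⋯z_{k_l}` of total degree `d` with `k₁ ≥ 2`. -/
def H0Deg (d : ℕ) : Submodule ℚ H :=
  Submodule.span ℚ
    {w | ∃ (l : ℕ) (k : Fin (l + 1) → ℕ),
      (∀ i, 1 ≤ k i) ∧ 2 ≤ k 0 ∧ (∑ i, k i) = d ∧ w = zwords k}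

/-- The multiplication map `M_n : H^{⊗(n+2)} → H`. -/
def Mn (n : ℕ) : TensorPower ℚ (n + 2) H →ₗ[ℚ] H :=
  PiTensorProduct.lift (MultilinearMap.mkPiAlgebraFin ℚ (n + 2) H)

/-- The `H`-bimodule action `a ◇ t ◇ b` on `H^{⊗(n+2)}`:
`a ◇ (w₁⊗⋯⊗w_{n+2}) ◇ b = w₁b ⊗ w₂ ⊗ ⋯ ⊗ w_{n+1} ⊗ a w_{n+2}`. -/
def dia (n : ℕ) (a : H) (t : TensorPower ℚ (n + 2) H) (b : H) : TensorPower ℚ (n + 2) H :=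
  PiTensorProduct.map
    (fun i => if i = 0 then LinearMap.mulRight ℚ b
      else if i = Fin.last (n + 1) then LinearMap.mulLeft ℚ a
      else LinearMap.id) t

/-- The pure tensor `x ⊗ z^{⊗n} ⊗ y ∈ H^{⊗(n+2)}`. -/
def xzy (n : ℕ) : TensorPower ℚ (n + 2) H :=
  PiTensorProduct.tprod ℚ
    (fun i : Fin (n + 2) => if i = 0 then Hx else if i = Fin.last (n + 1) then Hy else Hz)

/-- The pure tensor `x ⊗ y^{⊗(n+1)} ∈ H^{⊗(n+2)}`. -/
def xyy (n : ℕ) : TensorPower ℚ (n + 2) H :=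
  PiTensorProduct.tprod ℚ (fun i : Fin (n + 2) => if i = 0 then Hx else Hy)

/-- The defining properties of the family of maps `C_n : H → H^{⊗(n+2)}`. -/
def IsC (C : ∀ n : ℕ, H →ₗ[ℚ] TensorPower ℚ (n + 2) H) : Prop :=
  ∀ n, C n 1 = 0 ∧ C n Hx = xzy n ∧ C n Hy = -xzy n ∧
    ∀ w w' : H, C n (w * w') = dia n 1 (C n w) w' + dia n w (C n w') 1

/-- `γ`: the algebra endomorphism of `H` with `γ(x) = x`, `γ(y) = x + y`
(it is an automorphism). -/
def gam : H →ₐ[ℚ] H := FreeAlgebra.lift ℚ ![Hx, Hz]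

/-- `γ⁻¹`: the inverse automorphism of `γ`, having `γ⁻¹(x) = x`, `γ⁻¹(y) = y - x`. -/
def gamInv : H →ₐ[ℚ] H := FreeAlgebra.lift ℚ ![Hx, Hy - Hx]

/-- The defining properties of the family of maps `C̄_n : H → H^{⊗(n+2)}`. -/
def IsCbar (C : ∀ n : ℕ, H →ₗ[ℚ] TensorPower ℚ (n + 2) H) : Prop :=
  ∀ n, C n 1 = 0 ∧ C n Hx = xyy n ∧ C n Hy = -xyy n ∧
    ∀ w w' : H, C n (w * w') = dia n 1 (C n w) (gamInv w') + dia n (gamInv w) (C n w') 1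

/-- The value of `ρ` on the monomial `z_{k 0} ⋯ z_{k (l-1)}` (for `k` periodic of
period `l`):
`∑_{j<l} ∑_{i=1}^{k_j−1} z_{k_j−i+1} z_{k_{j+1}} ⋯ z_{k_{j+l−1}} z_i
  − ∑_{j<l} z_{k_j+1} z_{k_{j+1}} ⋯ z_{k_{j+l−1}}`. -/
def rhoFormula (k : ℕ → ℕ) (l : ℕ) : H :=
  (∑ j ∈ Finset.range l, ∑ i ∈ Finset.Icc 1 (k j - 1),
      zw (k j - i + 1) * zseq k (j + 1) (l - 1) * zw i) -
    ∑ j ∈ Finset.range l, zw (k j + 1) * zseq k (j + 1) (l - 1)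

/-- The defining property of the ℚ-linear map `ρ` on `Ȟ¹`: its values on the
monomials `z_{k₁}⋯z_{k_l}` (positive indices, not all 1). -/
def IsRho (rho : H →ₗ[ℚ] H) : Prop :=
  ∀ (l : ℕ) (k : ℕ → ℕ), 1 ≤ l → (∀ j, k (j + l) = k j) → (∀ j, 1 ≤ k j) →
    (∃ j, k j ≠ 1) → rho (zseq k 0 l) = rhoFormula k l

/-- The defining property of the map `d` on `ℚ + Hy`: `d(1) = 1`, `d(wy) = γ(w)y`. -/
def IsD (dm : H →ₗ[ℚ] H) : Prop := dm 1 = 1 ∧ ∀ w : H, dm (w * Hy) = gam w * Hy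

/-- The `n`-step Lucas numbers `L^n_m`: `L^n_m = 2^m − 1` for `m ≤ n`,
`L^n_m = L^n_{m−1} + ⋯ + L^n_{m−n}` for `m ≥ n+1`, and `L^0_m = 0`. -/
def Lucas (n : ℕ) (m : ℕ) : ℕ :=
  if _hn : n = 0 then 0
  else if _hm : m ≤ n then 2 ^ m - 1
  else ∑ i ∈ (Finset.Icc 1 n).attach, Lucas n (m - i.1)
termination_by m
decreasing_by
  have h1 := (Finset.mem_Icc.mp i.2).1
  omega

/-- The multiple zeta value `ζ(k₁,…,k_l) = ∑_{n₁ > ⋯ > n_l ≥ 1} 1/(n₁^{k₁}⋯n_l^{k_l})`. -/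
def mzeta {l : ℕ} (k : Fin l → ℕ) : ℝ :=
  ∑' n : {n : Fin l → ℕ // StrictAnti n ∧ ∀ i, 0 < n i}, ∏ i, ((n.1 i : ℝ) ^ k i)⁻¹

/-- The multiple zeta-star value
`ζ*(k₁,…,k_l) = ∑_{n₁ ≥ ⋯ ≥ n_l ≥ 1} 1/(n₁^{k₁}⋯n_l^{k_l})`. -/
def mzetaStar {l : ℕ} (k : Fin l → ℕ) : ℝ :=
  ∑' n : {n : Fin l → ℕ // Antitone n ∧ ∀ i, 0 < n i}, ∏ i, ((n.1 i : ℝ) ^ k i)⁻¹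

/-- The defining property of the map `Z : H⁰ → ℝ`. -/
def IsZ (Z : H →ₗ[ℚ] ℝ) : Prop :=
  Z 1 = 1 ∧ ∀ (l : ℕ) (k : Fin (l + 1) → ℕ), (∀ i, 1 ≤ k i) → 2 ≤ k 0 →
    Z (zwords k) = mzeta k

/-- The defining property of the map `Z̄ : H⁰ → ℝ`. -/
def IsZbar (Z : H →ₗ[ℚ] ℝ) : Prop :=
  Z 1 = 1 ∧ ∀ (l : ℕ) (k : Fin (l + 1) → ℕ), (∀ i, 1 ≤ k i) → 2 ≤ k 0 →
    Z (zwords k) = mzetaStar k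

/-- The defining property of the map `α : Hy → Hy`, dividing each monomial by
its depth. -/
def IsAlpha (am : H →ₗ[ℚ] H) : Prop :=
  ∀ (l : ℕ) (k : Fin (l + 1) → ℕ), (∀ i, 1 ≤ k i) →
    am (zwords k) = ((l : ℚ) + 1)⁻¹ • zwords k

/-- Cyclic equivalence on tuples: `v` is a cyclic shift of `u`.  Here `Fin 2`
encodes the two symbols: `0 = y`, `1 = z`. -/
def cycRel (l : ℕ) (u v : Fin l → Fin 2) : Prop := ∃ j : Fin l, ∀ t, v t = u (t + j)

/-- `X_{l,n}`: tuples in `{y,z}^l` containing at least `n` cyclically consecutive `z`'s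
(i.e. some cyclic shift begins with `z^n`).  `0 = y`, `1 = z`. -/
def Xln (l n : ℕ) : Set (Fin l → Fin 2) :=
  {u | ∃ j : Fin l, ∀ t : Fin l, (t : ℕ) < n → u (t + j) = 1}

/-- `Y_{l,n} = X_{l,n}/∼`, the set of cyclic equivalence classes in `X_{l,n}`. -/
def Yln (l n : ℕ) : Type := Quot (fun u v : Xln l n => cycRel l u.1 v.1)

/-- The letters `y`, `z` of `{y,z}`-tuples, as elements of `H`: `0 ↦ y`, `1 ↦ z`. -/
def yz : Fin 2 → H := ![Hy, Hz]

/-- The product `u₁⋯u_l ∈ H` of a `{y,z}`-tuple. -/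
def wprod {l : ℕ} (u : Fin l → Fin 2) : H := (List.ofFn fun t => yz (u t)).prod


/-! ### Auxiliary development -/

def tp (a b : H) : TensorPower ℚ 2 H := PiTensorProduct.tprod ℚ ![a, b]

lemma fin2_eta (f : Fin 2 → H) : f = ![f 0, f 1] := by
  funext i; fin_cases i <;> simp

lemma Mn0_tprod (f : Fin 2 → H) : Mn 0 (PiTensorProduct.tprod ℚ f) = f 0 * f 1 := by
  simp [Mn, MultilinearMap.mkPiAlgebraFin_apply, List.ofFn_succ]

lemma Mn0_tp (a b : H) : Mn 0 (tp a b) = a * b := by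
  rw [tp, Mn0_tprod]; simp

lemma dia0_tprod (a b : H) (f : Fin 2 → H) :
    dia 0 a (PiTensorProduct.tprod ℚ f) b = tp (f 0 * b) (a * f 1) := by
  rw [dia, PiTensorProduct.map_tprod, tp]
  congr 1
  funext i
  fin_cases i <;> simp [Fin.last]

lemma dia0_tp (a b w₁ w₂ : H) : dia 0 a (tp w₁ w₂) b = tp (w₁ * b) (a * w₂) := by
  rw [tp, dia0_tprod]; simp

lemma dia_linear (n : ℕ) (a b : H) : ∀ (t t' : TensorPower ℚ (n+2) H) (c : ℚ),
    dia n a (t + t') b = dia n a t b + dia n a t' b ∧ dia n a (c • t) b = c • dia n a t b := by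
  intro t t' c; constructor <;> simp [dia]

lemma dia_add (n : ℕ) (a b : H) (t t' : TensorPower ℚ (n+2) H) :
    dia n a (t + t') b = dia n a t b + dia n a t' b := by simp [dia]

lemma dia_smul (n : ℕ) (a b : H) (c : ℚ) (t : TensorPower ℚ (n+2) H) :
    dia n a (c • t) b = c • dia n a t b := by simp [dia]

lemma Mn0_dia_middle (b : H) (t : TensorPower ℚ 2 H) :
    Mn 0 (dia 0 1 t b) = Mn 0 (dia 0 b t 1) := by
  induction t using PiTensorProduct.induction_on with
  | smul_tprod c f =>
      rw [dia_smul, dia_smul, map_smul, map_smul, dia0_tprod, dia0_tprod, Mn0_tp, Mn0_tp]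
      simp [mul_assoc]
  | add t t' ht ht' => rw [dia_add, dia_add, map_add, map_add, ht, ht']

lemma dia0_comp (a a' b b' : H) (t : TensorPower ℚ 2 H) :
    dia 0 a (dia 0 a' t b') b = dia 0 (a * a') t (b' * b) := by
  induction t using PiTensorProduct.induction_on with
  | smul_tprod c f =>
      rw [dia_smul, dia_smul, dia_smul, dia0_tprod, dia0_tprod, tp, dia0_tprod]
      simp [tp, mul_assoc]
  | add t t' ht ht' => rw [dia_add, dia_add, dia_add, ht, ht']

lemma dia0_one (t : TensorPower ℚ 2 H) : dia 0 1 t 1 = t := by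
  have : (fun i : Fin 2 => if i = 0 then LinearMap.mulRight ℚ (1:H)
      else if i = Fin.last 1 then LinearMap.mulLeft ℚ (1:H)
      else LinearMap.id) = fun _ => (LinearMap.id : H →ₗ[ℚ] H) := by
    funext i; split
    · exact LinearMap.ext fun x => mul_one x
    · split
      · exact LinearMap.ext fun x => one_mul x
      · rfl
  rw [dia, this, PiTensorProduct.map_id]; rfl

lemma gam_x : gam Hx = Hx := by simp [gam, Hx, FreeAlgebra.lift_ι_apply]
lemma gam_y : gam Hy = Hz := by simp [gam, Hy, FreeAlgebra.lift_ι_apply]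
lemma gamInv_x : gamInv Hx = Hx := by simp [gamInv, Hx, FreeAlgebra.lift_ι_apply]
lemma gamInv_y : gamInv Hy = Hy - Hx := by simp [gamInv, Hy, FreeAlgebra.lift_ι_apply]
lemma gamInv_z : gamInv Hz = Hy := by
  rw [Hz, map_add, gamInv_x, gamInv_y]; abel

lemma xyy0 : xyy 0 = tp Hx Hy := by
  rw [xyy, tp]; congr 1; funext i; fin_cases i <;> simp

section CbFacts
variable (Cb : ∀ n : ℕ, H →ₗ[ℚ] TensorPower ℚ (n + 2) H) (hCb : IsCbar Cb)
include hCb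

lemma Cb0_one : Cb 0 1 = 0 := (hCb 0).1
lemma Cb0_x : Cb 0 Hx = tp Hx Hy := by rw [(hCb 0).2.1, xyy0]
lemma Cb0_y : Cb 0 Hy = -tp Hx Hy := by rw [(hCb 0).2.2.1, xyy0]
lemma Cb0_z : Cb 0 Hz = 0 := by
  rw [Hz, map_add, Cb0_x Cb hCb, Cb0_y Cb hCb]; abel

end CbFacts

/-- `ψ a w b = M₀(a ◇ C̄₀(w) ◇ b)`. -/
def psi (Cb : ∀ n : ℕ, H →ₗ[ℚ] TensorPower ℚ (n + 2) H) (a w b : H) : H :=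
  Mn 0 (dia 0 a (Cb 0 w) b)

section PsiFacts
variable (Cb : ∀ n : ℕ, H →ₗ[ℚ] TensorPower ℚ (n + 2) H) (hCb : IsCbar Cb)
include hCb

lemma psi_rho (w : H) : Mn 0 (Cb 0 w) = psi Cb 1 w 1 := by rw [psi, dia0_one]

lemma psi_mul (a b w w' : H) :
    psi Cb a (w * w') b = psi Cb a w (gamInv w' * b) + psi Cb (a * gamInv w) w' b := by
  rw [psi, (hCb 0).2.2.2, dia_add, map_add, dia0_comp, dia0_comp, mul_one, one_mul, psi, psi]

lemma psi_one (a b : H) : psi Cb a 1 b = 0 := by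
  rw [psi, Cb0_one Cb hCb, dia, map_zero, map_zero]

lemma psi_x (a b : H) : psi Cb a Hx b = Hx * b * a * Hy := by
  rw [psi, Cb0_x Cb hCb, dia0_tp, Mn0_tp, mul_assoc, mul_assoc, mul_assoc]

lemma psi_z (a b : H) : psi Cb a Hz b = 0 := by
  rw [psi, Cb0_z Cb hCb, dia, map_zero, map_zero]

lemma rho_trace (u v : H) : Mn 0 (Cb 0 (u * v)) = Mn 0 (Cb 0 (v * u)) := by
  rw [(hCb 0).2.2.2, (hCb 0).2.2.2, map_add, map_add, Mn0_dia_middle,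
    Mn0_dia_middle (gamInv u) (Cb 0 v), add_comm]

lemma psi_pow_x (a b : H) (m : ℕ) :
    psi Cb a (Hx ^ m) b = ∑ i ∈ Finset.range m, Hx ^ (m - i) * (b * (a * (Hx ^ i * Hy))) := by
  induction m generalizing a b with
  | zero => rw [pow_zero, psi_one Cb hCb]; simp
  | succ m ih =>
      rw [pow_succ', psi_mul Cb hCb, map_pow, gamInv_x, psi_x Cb hCb, ih]
      conv_rhs => rw [Finset.sum_range_succ', add_comm]
      congr 1
      rotate_left
      · refine Finset.sum_congr rfl fun i _ => ?_
        have h1 : m + 1 - (i + 1) = m - i := by omega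
        rw [h1, mul_assoc a Hx, ← mul_assoc Hx (Hx ^ i), ← pow_succ']
      · rw [← mul_assoc Hx (Hx ^ m) b, ← pow_succ']
        simp [mul_assoc]

lemma psi_xz (a b : H) (e : ℕ) :
    psi Cb a (Hx ^ e * Hz) b =
      ∑ i ∈ Finset.range e, Hx ^ (e - i) * (Hy * (b * (a * (Hx ^ i * Hy)))) := by
  rw [psi_mul Cb hCb, gamInv_z, psi_z Cb hCb, add_zero, psi_pow_x Cb hCb]
  refine Finset.sum_congr rfl fun i _ => ?_
  simp only [mul_assoc]

end PsiFacts

/-- `rp f m = f 0 * f 1 * ⋯ * f (m-1)`. -/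
def rp (f : ℕ → H) (m : ℕ) : H := ((List.range m).map f).prod

lemma rp_zero (f : ℕ → H) : rp f 0 = 1 := rfl

lemma rp_succ_right (f : ℕ → H) (m : ℕ) : rp f (m + 1) = rp f m * f m := by
  rw [rp, List.range_succ, List.map_append, List.prod_append]; simp [rp]

lemma rp_succ_left (f : ℕ → H) (m : ℕ) : rp f (m + 1) = f 0 * rp (fun t => f (t + 1)) m := by
  rw [rp, List.range_succ_eq_map, List.map_cons, List.prod_cons, List.map_map]
  rfl

lemma rp_congr {f g : ℕ → H} {m : ℕ} (h : ∀ t < m, f t = g t) : rp f m = rp g m := by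
  unfold rp
  congr 1
  apply List.map_congr_left
  intro t ht
  exact h t (List.mem_range.mp ht)

lemma rp_add (f : ℕ → H) (m n : ℕ) : rp f (m + n) = rp f m * rp (fun t => f (m + t)) n := by
  induction n with
  | zero => simp [rp_zero]
  | succ n ih => rw [← add_assoc, rp_succ_right, ih, rp_succ_right, mul_assoc]

lemma rp_map (g : H →ₐ[ℚ] H) (f : ℕ → H) (m : ℕ) : g (rp f m) = rp (fun t => g (f t)) m := by
  induction m with
  | zero => simp [rp_zero]
  | succ m ih => rw [rp_succ_right, map_mul, ih, rp_succ_right]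

lemma zseq_eq_rp (k : ℕ → ℕ) (a m : ℕ) : zseq k a m = rp (fun t => zw (k (a + t))) m := rfl

lemma zseq_zero (k : ℕ → ℕ) (a : ℕ) : zseq k a 0 = 1 := rfl

lemma zseq_succ_left (k : ℕ → ℕ) (a m : ℕ) :
    zseq k a (m + 1) = zw (k a) * zseq k (a + 1) m := by
  rw [zseq_eq_rp, rp_succ_left, zseq_eq_rp]
  congr 1
  exact rp_congr fun t _ => congrArg (fun n => zw (k n)) (by omega)

lemma zseq_succ_right (k : ℕ → ℕ) (a m : ℕ) :
    zseq k a (m + 1) = zseq k a m * zw (k (a + m)) := by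
  rw [zseq_eq_rp, rp_succ_right, zseq_eq_rp]

/-- The product `(x^{k_a-1}z)(x^{k_{a+1}-1}z)⋯` of `m` factors. -/
def prodZ (k : ℕ → ℕ) (a m : ℕ) : H := rp (fun t => Hx ^ (k (a + t) - 1) * Hz) m

lemma gamInv_prodZ (k : ℕ → ℕ) (a m : ℕ) : gamInv (prodZ k a m) = zseq k a m := by
  rw [prodZ, rp_map, zseq_eq_rp]
  exact rp_congr fun t _ => by rw [map_mul, map_pow, gamInv_x, gamInv_z, zw]

lemma psi_prodZ (Cb : ∀ n : ℕ, H →ₗ[ℚ] TensorPower ℚ (n + 2) H) (hCb : IsCbar Cb)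
    (k : ℕ → ℕ) (a b : H) (c m : ℕ) :
    psi Cb a (prodZ k c m) b =
      ∑ j ∈ Finset.range m, ∑ i ∈ Finset.range (k (c + j) - 1),
        Hx ^ (k (c + j) - 1 - i) *
          (Hy * (zseq k (c + j + 1) (m - 1 - j) * (b * (a * (zseq k c j * (Hx ^ i * Hy)))))) := by
  induction m generalizing c a b with
  | zero => rw [prodZ, rp_zero, psi_one Cb hCb]; simp
  | succ m ih =>
      have hsplit : prodZ k c (m + 1) = Hx ^ (k c - 1) * Hz * prodZ k (c + 1) m := by
        rw [prodZ, rp_succ_left]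
        congr 1
        exact rp_congr fun t _ => by
          show Hx ^ (k (c + (t + 1)) - 1) * Hz = Hx ^ (k (c + 1 + t) - 1) * Hz
          rw [show c + (t + 1) = c + 1 + t from by omega]
      rw [hsplit, psi_mul Cb hCb, gamInv_prodZ, map_mul, map_pow, gamInv_x, gamInv_z,
        psi_xz Cb hCb, ih]
      conv_rhs => rw [Finset.sum_range_succ', add_comm]
      congr 1
      rotate_left
      · refine Finset.sum_congr rfl fun j _ => ?_
        have e1 : c + 1 + j = c + (j + 1) := by omega
        have e2 : m - 1 - j = m + 1 - 1 - (j + 1) := by omega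
        rw [zseq_succ_left k c j]
        simp only [zw, e1, e2, mul_assoc]
      · refine Finset.sum_congr rfl fun i _ => ?_
        simp [zseq_zero, mul_assoc]

lemma gam_zseq (k : ℕ → ℕ) (a m : ℕ) : gam (zseq k a m) = prodZ k a m := by
  rw [zseq_eq_rp, rp_map, prodZ]
  exact rp_congr fun t _ => by rw [zw, map_mul, map_pow, gam_x, gam_y]

lemma dm_zseq (dm : H →ₗ[ℚ] H) (hd : IsD dm) (k : ℕ → ℕ) (j l : ℕ) (hl : 1 ≤ l) :
    dm (zseq k j l) = prodZ k j (l - 1) * zw (k (j + (l - 1))) := by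
  obtain ⟨m, rfl⟩ : ∃ m, l = m + 1 := ⟨l - 1, by omega⟩
  have h1 : zseq k j (m + 1) = (zseq k j m * Hx ^ (k (j + m) - 1)) * Hy := by
    rw [zseq_succ_right, zw, mul_assoc]
  rw [h1, hd.2, map_mul, map_pow, gam_x, gam_zseq, mul_assoc, ← zw]
  simp

lemma rho_xpow (Cb : ∀ n : ℕ, H →ₗ[ℚ] TensorPower ℚ (n + 2) H) (hCb : IsCbar Cb) (N : ℕ) :
    Mn 0 (Cb 0 (Hx ^ N)) = N • zw (N + 1) := by
  rw [psi_rho Cb hCb, psi_pow_x Cb hCb]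
  have : ∀ i ∈ Finset.range N, Hx ^ (N - i) * ((1:H) * ((1:H) * (Hx ^ i * Hy))) = zw (N+1) := by
    intro i hi
    have := Finset.mem_range.mp hi
    rw [one_mul, one_mul, ← mul_assoc, ← pow_add, zw]
    congr 2
    omega
  rw [Finset.sum_congr rfl this, Finset.sum_const, Finset.card_range]

/-- The word `x^{k_a-1}u₀ x^{k_{a+1}-1}u₁ ⋯` where `uₜ = y` if `T t` and `x` otherwise. -/
def wseg (k : ℕ → ℕ) (T : ℕ → Bool) (a m : ℕ) : H :=
  rp (fun t => Hx ^ (k (a + t) - 1) * (if T t then Hy else Hx)) m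

lemma wseg_congr (k : ℕ → ℕ) {T T' : ℕ → Bool} (a m : ℕ) (h : ∀ t < m, T t = T' t) :
    wseg k T a m = wseg k T' a m :=
  rp_congr fun t ht => by rw [h t ht]

lemma wseg_succ_right (k : ℕ → ℕ) (T : ℕ → Bool) (a m : ℕ) :
    wseg k T a (m + 1) = wseg k T a m * (Hx ^ (k (a + m) - 1) * (if T m then Hy else Hx)) :=
  rp_succ_right _ _

lemma wseg_succ_left (k : ℕ → ℕ) (T : ℕ → Bool) (a m : ℕ) :
    wseg k T a (m + 1) =
      Hx ^ (k a - 1) * (if T 0 then Hy else Hx) * wseg k (fun t => T (t + 1)) (a + 1) m := by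
  rw [wseg, rp_succ_left]
  congr 1
  exact rp_congr fun t _ => by rw [show a + (t + 1) = a + 1 + t from by omega]

lemma wseg_period (k : ℕ → ℕ) {l : ℕ} (hper : ∀ j, k (j + l) = k j) (T : ℕ → Bool) (a m : ℕ) :
    wseg k T (a + l) m = wseg k T a m :=
  rp_congr fun t _ => by rw [show a + l + t = a + t + l from by omega, hper]

/-- Expansion of the `z`-word into `{x,y}`-words over subsets. -/
lemma prodZ_expand (k : ℕ → ℕ) (m a : ℕ) :
    prodZ k a m =
      ∑ s ∈ (Finset.range m).powerset, wseg k (fun t => decide (t ∈ s)) a m := by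
  induction m generalizing a with
  | zero => simp [prodZ, rp_zero, wseg]
  | succ m ih =>
      rw [prodZ, rp_succ_right, ← prodZ, ih, Finset.range_add_one,
        Finset.sum_powerset_insert (by simp)]
      have hy : ∀ s ∈ (Finset.range m).powerset,
          wseg k (fun t => decide (t ∈ insert m s)) a (m + 1) =
            wseg k (fun t => decide (t ∈ s)) a m * (Hx ^ (k (a + m) - 1) * Hy) := by
        intro s hs
        rw [wseg_succ_right]
        congr 1
        · exact wseg_congr k a m fun t ht => by
            simp [Finset.mem_insert, Nat.ne_of_lt ht]
        · simp
      have hx : ∀ s ∈ (Finset.range m).powerset,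
          wseg k (fun t => decide (t ∈ s)) a (m + 1) =
            wseg k (fun t => decide (t ∈ s)) a m * (Hx ^ (k (a + m) - 1) * Hx) := by
        intro s hs
        rw [wseg_succ_right]
        congr 1
        have : m ∉ s := fun hm => by
          have := Finset.mem_powerset.mp hs hm
          simp at this
        simp [this]
      rw [Finset.sum_congr rfl hy, Finset.sum_congr rfl hx, ← Finset.sum_mul, ← Finset.sum_mul,
        Hz, mul_add, add_comm]
      rw [mul_add, add_comm]

/-- Products of `zw`'s over a list. -/
def zl (c : List ℕ) : H := (c.map zw).prod

lemma am_zl (am : H →ₗ[ℚ] H) (ha : IsAlpha am) (c : List ℕ) (hc : c ≠ [])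
    (hpos : ∀ p ∈ c, 1 ≤ p) : am (zl c) = ((c.length : ℚ))⁻¹ • zl c := by
  obtain ⟨p, cs, rfl⟩ : ∃ p cs, c = p :: cs := by
    cases c with
    | nil => exact absurd rfl hc
    | cons p cs => exact ⟨p, cs, rfl⟩
  have hz : zwords (fun i : Fin (cs.length + 1) => (p :: cs).get i) = zl (p :: cs) := by
    rw [zwords, zl]
    rw [show (List.map zw (p :: cs)) = (List.ofFn ((p :: cs).get)).map zw from by
      rw [List.ofFn_get]]
    rw [List.map_ofFn]
    rfl
  have := ha cs.length (fun i => (p :: cs).get i) (fun i => hpos _ (List.get_mem _ _))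
  rw [hz] at this
  rw [this]
  norm_num

lemma xpow_mul_zl (e p : ℕ) (hp : 1 ≤ p) (c : List ℕ) :
    Hx ^ e * zl (p :: c) = zl ((p + e) :: c) := by
  simp only [zl, List.map_cons, List.prod_cons, zw, ← mul_assoc, ← pow_add]
  congr 3
  omega

lemma wseg_zl (k : ℕ → ℕ) (hpos : ∀ i, 1 ≤ k i) :
    ∀ (m : ℕ) (T : ℕ → Bool) (a : ℕ), 1 ≤ m → T (m - 1) = true →
      ∃ c : List ℕ, wseg k T a m = zl c ∧ c ≠ [] ∧
        c.length = (List.range m).countP (fun t => T t) ∧ ∀ p ∈ c, 1 ≤ p := by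
  intro m
  induction m with
  | zero => omega
  | succ m ih =>
      intro T a _ hT
      rcases Nat.eq_zero_or_pos m with rfl | hm
      · refine ⟨[k a], ?_, by simp, ?_, by simpa using hpos a⟩
        · rw [wseg_succ_left]
          simp only [hT]
          simp [wseg, rp_zero, zl, zw]
        · have : T 0 = true := hT
          simp [List.range_succ, List.countP_cons, this]
      · have hT' : (fun t => T (t + 1)) (m - 1) = true := by
          show T (m - 1 + 1) = true
          rw [show m - 1 + 1 = m + 1 - 1 from by omega]; exact hT
        obtain ⟨c, hc, hne, hlen, hcpos⟩ := ih (fun t => T (t + 1)) (a + 1) hm hT'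
        have hcount : (List.range (m + 1)).countP (fun t => T t) =
            (if T 0 then 1 else 0) + (List.range m).countP (fun t => T (t + 1)) := by
          rw [List.range_succ_eq_map, List.countP_cons, List.countP_map]
          rcases h0 : T 0 <;> simp [h0, Function.comp_def, Nat.succ_eq_add_one, add_comm]
        cases h0 : T 0 with
        | true =>
            refine ⟨k a :: c, ?_, by simp, ?_, ?_⟩
            · rw [wseg_succ_left, h0, hc]
              simp [zl, zw]
            · simp only [hcount, h0, if_true, List.length_cons, hlen]
              omega
            · intro p hp
              rcases List.mem_cons.mp hp with rfl | hp
              · exact hpos a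
              · exact hcpos p hp
        | false =>
            obtain ⟨p, cs, rfl⟩ : ∃ p cs, c = p :: cs := by
              cases c with
              | nil => exact absurd rfl hne
              | cons p cs => exact ⟨p, cs, rfl⟩
            refine ⟨(p + k a) :: cs, ?_, by simp, ?_, ?_⟩
            · rw [wseg_succ_left, h0, hc, if_neg (by simp)]
              rw [show Hx ^ (k a - 1) * Hx = Hx ^ (k a) from by
                rw [← pow_succ]; congr 1; have := hpos a; omega]
              exact xpow_mul_zl _ _ (hcpos p (by simp)) _
            · simp [hcount, h0, List.length_cons] at hlen ⊢
              omega
            · intro q hq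
              rcases List.mem_cons.mp hq with rfl | hq
              · have := hpos a; omega
              · exact hcpos q (by simp [hq])

lemma am_wseg (am : H →ₗ[ℚ] H) (ha : IsAlpha am) (k : ℕ → ℕ) (hpos : ∀ i, 1 ≤ k i)
    (m : ℕ) (T : ℕ → Bool) (a : ℕ) (hm : 1 ≤ m) (hT : T (m - 1) = true) :
    am (wseg k T a m) =
      (((List.range m).countP (fun t => T t) : ℚ))⁻¹ • wseg k T a m := by
  obtain ⟨c, hc, hne, hlen, hcpos⟩ := wseg_zl k hpos m T a hm hT
  rw [hc, am_zl am ha c hne hcpos, hlen]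

section Rot
variable (Cb : ∀ n : ℕ, H →ₗ[ℚ] TensorPower ℚ (n + 2) H) (hCb : IsCbar Cb)
  (k : ℕ → ℕ) {l : ℕ} (hper : ∀ j, k (j + l) = k j) (hl : 1 ≤ l)
include hCb hper hl

lemma rho_wseg_rot (T : ℕ → Bool) (a : ℕ) :
    Mn 0 (Cb 0 (wseg k T a l)) = Mn 0 (Cb 0 (wseg k (fun t => T ((t + 1) % l)) (a + 1) l)) := by
  obtain ⟨m, rfl⟩ : ∃ m, l = m + 1 := ⟨l - 1, by omega⟩
  rw [wseg_succ_left, wseg_succ_right, rho_trace Cb hCb]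
  refine congrArg _ (congrArg _ ?_)
  congr 1
  · exact wseg_congr k _ m fun t ht => by
      rw [Nat.mod_eq_of_lt (by omega)]
  · rw [show a + 1 + m = a + (m + 1) from by omega, hper a, Nat.mod_self]

lemma rho_wseg_rot_n (T : ℕ → Bool) (a : ℕ) (n : ℕ) :
    Mn 0 (Cb 0 (wseg k T a l)) =
      Mn 0 (Cb 0 (wseg k (fun t => T ((t + n) % l)) (a + n) l)) := by
  induction n with
  | zero =>
      rw [add_zero]
      congr 1
      apply congrArg
      exact wseg_congr k a l fun t ht => by rw [Nat.add_zero, Nat.mod_eq_of_lt ht]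
  | succ n ihn =>
      rw [ihn, rho_wseg_rot Cb hCb k hper hl]
      rw [show a + n + 1 = a + (n + 1) from rfl]
      congr 1
      apply congrArg
      exact wseg_congr k _ l fun t ht => by rw [Nat.mod_add_mod, show t + 1 + n = t + (n + 1) from by omega]

lemma rho_wseg_base (T : ℕ → Bool) (j : ℕ) (hj : j < l) :
    Mn 0 (Cb 0 (wseg k T j l)) =
      Mn 0 (Cb 0 (wseg k (fun t => T ((t + (l - j)) % l)) 0 l)) := by
  rw [rho_wseg_rot_n Cb hCb k hper hl T j (l - j), show j + (l - j) = 0 + l from by omega,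
    wseg_period k hper]

end Rot

section Assembly

/-- Indicator of a finite set, as a `Bool`-valued function. -/
def TFin (S : Finset ℕ) : ℕ → Bool := fun t => decide (t ∈ S)

lemma countP_filter (n : ℕ) (S : Finset ℕ) :
    (List.range n).countP (fun t => decide (t ∈ S)) = ((Finset.range n).filter (· ∈ S)).card := by
  induction n with
  | zero => simp
  | succ n ih =>
      rw [List.range_succ, List.countP_append, ih, Finset.range_add_one, Finset.filter_insert]
      by_cases h : n ∈ S
      · rw [if_pos h, Finset.card_insert_of_notMem (by simp)]
        simp [h]
      · rw [if_neg h]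
        simp [h]

lemma countP_mem_range (n : ℕ) (S : Finset ℕ) (hS : S ⊆ Finset.range n) :
    (List.range n).countP (fun t => decide (t ∈ S)) = S.card := by
  rw [countP_filter, Finset.filter_mem_eq_inter, Finset.inter_eq_right.mpr hS]

lemma mod_cancel1 {l : ℕ} (hl : 1 ≤ l) {j r : ℕ} (hj : j ≤ l) (hr : r < l) :
    ((r + j) % l + (l - j)) % l = r := by
  rw [Nat.mod_add_mod, show r + j + (l - j) = r + l from by omega, Nat.add_mod_right,
    Nat.mod_eq_of_lt hr]

lemma mod_cancel2 {l : ℕ} (hl : 1 ≤ l) {j r : ℕ} (hj : j ≤ l) (hr : r < l) :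
    ((r + (l - j)) % l + j) % l = r := by
  rw [Nat.mod_add_mod, show r + (l - j) + j = r + l from by omega, Nat.add_mod_right,
    Nat.mod_eq_of_lt hr]

lemma zseq_add (k : ℕ → ℕ) (a m n : ℕ) : zseq k a (m + n) = zseq k a m * zseq k (a + m) n := by
  rw [zseq_eq_rp, rp_add, zseq_eq_rp, zseq_eq_rp]
  congr 1
  exact rp_congr fun t _ => congrArg (fun i => zw (k i)) (by omega)

lemma zseq_period (k : ℕ → ℕ) {l : ℕ} (hper : ∀ j, k (j + l) = k j) (a m : ℕ) :
    zseq k (a + l) m = zseq k a m := by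
  rw [zseq_eq_rp, zseq_eq_rp]
  exact rp_congr fun t _ => by
    rw [show a + l + t = a + t + l from by omega, hper]

lemma wseg_allx (k : ℕ → ℕ) (hpos : ∀ i, 1 ≤ k i) (a m : ℕ) :
    wseg k (TFin ∅) a m = Hx ^ (∑ t ∈ Finset.range m, k (a + t)) := by
  induction m with
  | zero => simp [wseg, rp_zero]
  | succ m ih =>
      have hf : TFin ∅ m = false := by simp [TFin]
      rw [wseg_succ_right, ih, hf, if_neg (by simp), ← pow_succ, ← pow_add,
        Finset.sum_range_succ]
      congr 1
      have := hpos (a + m)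
      omega

lemma back_mod {l p : ℕ} (hl : 1 ≤ l) (hpl : p < l) : (l - 1 + (p + 1) % l) % l = p := by
  rw [Nat.add_mod_mod, show l - 1 + (p + 1) = p + l from by omega, Nat.add_mod_right,
    Nat.mod_eq_of_lt hpl]

section Main
variable (Cb : ∀ n : ℕ, H →ₗ[ℚ] TensorPower ℚ (n + 2) H) (hCb : IsCbar Cb)
  (k : ℕ → ℕ) {l : ℕ} (hper : ∀ j, k (j + l) = k j) (hl : 1 ≤ l) (hpos : ∀ j, 1 ≤ k j)

/-- The weighted value of `ρ̄₀` on the basepoint rotation of a cyclic `{x,y}`-word. -/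
def Gv (Cb : ∀ n : ℕ, H →ₗ[ℚ] TensorPower ℚ (n + 2) H) (k : ℕ → ℕ) (l : ℕ)
    (T : Finset ℕ) : H :=
  ((T.card : ℚ))⁻¹ • Mn 0 (Cb 0 (wseg k (TFin T) 0 l))

include hCb hper hl hpos

lemma step1 (am : H →ₗ[ℚ] H) (ha : IsAlpha am) (dm : H →ₗ[ℚ] H) (hd : IsD dm) (j : ℕ) :
    Mn 0 (Cb 0 (am (dm (zseq k j l)))) =
      ∑ s ∈ (Finset.range (l - 1)).powerset,
        (((s.card : ℚ) + 1))⁻¹ •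
          Mn 0 (Cb 0 (wseg k (TFin (insert (l - 1) s)) j l)) := by
  have hins : ∀ s ∈ (Finset.range (l - 1)).powerset,
      insert (l - 1) s ⊆ Finset.range l := by
    intro s hs t ht
    rcases Finset.mem_insert.mp ht with rfl | ht
    · exact Finset.mem_range.mpr (by omega)
    · have := Finset.mem_powerset.mp hs ht
      exact Finset.mem_range.mpr (by simp at this; omega)
  have hnm : ∀ s ∈ (Finset.range (l - 1)).powerset, (l - 1) ∉ s := by
    intro s hs h
    have := Finset.mem_powerset.mp hs h
    simp at this
  have hdm : dm (zseq k j l) =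
      ∑ s ∈ (Finset.range (l - 1)).powerset, wseg k (TFin (insert (l - 1) s)) j l := by
    rw [dm_zseq dm hd k j l hl, prodZ_expand, Finset.sum_mul]
    refine Finset.sum_congr rfl fun s hs => ?_
    obtain ⟨m, hm⟩ : ∃ m, l = m + 1 := ⟨l - 1, by omega⟩
    subst hm
    simp only [Nat.add_sub_cancel] at *
    rw [wseg_succ_right]
    congr 1
    · exact wseg_congr k j m fun t ht => by
        simp [TFin, Finset.mem_insert, Nat.ne_of_lt ht]
    · rw [zw]
      congr 1
      simp [TFin]
  rw [hdm, map_sum, map_sum, map_sum]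
  refine Finset.sum_congr rfl fun s hs => ?_
  have hT : TFin (insert (l - 1) s) (l - 1) = true := by simp [TFin]
  rw [am_wseg am ha k hpos l _ j hl hT, map_smul, map_smul]
  simp only [TFin]
  rw [countP_mem_range l _ (hins s hs), Finset.card_insert_of_notMem (hnm s hs)]
  norm_num

lemma step2 (j : ℕ) (hj : j < l) (s : Finset ℕ) (hs : s ∈ (Finset.range (l - 1)).powerset) :
    (((s.card : ℚ) + 1))⁻¹ • Mn 0 (Cb 0 (wseg k (TFin (insert (l - 1) s)) j l)) =
      Gv Cb k l ((insert (l - 1) s).image (fun r => (r + j) % l)) := by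
  have hsub : ∀ r ∈ insert (l - 1) s, r < l := by
    intro r hr
    rcases Finset.mem_insert.mp hr with rfl | hr
    · omega
    · have := Finset.mem_powerset.mp hs hr
      simp at this; omega
  have hinj : Set.InjOn (fun r => (r + j) % l) (insert (l - 1) s : Finset ℕ) := by
    intro r1 h1 r2 h2 he
    have e1 := mod_cancel1 hl (le_of_lt hj) (hsub r1 h1)
    have e2 := mod_cancel1 hl (le_of_lt hj) (hsub r2 h2)
    simp only at he
    rw [← e1, ← e2, he]
  have hcard : ((insert (l - 1) s).image (fun r => (r + j) % l)).card = s.card + 1 := by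
    rw [Finset.card_image_of_injOn hinj,
      Finset.card_insert_of_notMem (fun h => by
        have := Finset.mem_powerset.mp hs h; simp at this)]
  rw [Gv, hcard, rho_wseg_base Cb hCb k hper hl _ j hj]
  have hw : wseg k (fun t => TFin (insert (l - 1) s) ((t + (l - j)) % l)) 0 l =
      wseg k (TFin ((insert (l - 1) s).image (fun r => (r + j) % l))) 0 l := by
    refine wseg_congr k 0 l fun t ht => ?_
    simp only [TFin, decide_eq_decide, Finset.mem_image]
    constructor
    · intro h
      exact ⟨(t + (l - j)) % l, h, mod_cancel2 hl (le_of_lt hj) ht⟩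
    · rintro ⟨r, hr, rfl⟩
      rw [mod_cancel1 hl (le_of_lt hj) (hsub r hr)]
      exact hr
  rw [hw]
  norm_num

lemma step3 :
    ∑ j ∈ Finset.range l, ∑ s ∈ (Finset.range (l - 1)).powerset,
        Gv Cb k l ((insert (l - 1) s).image (fun r => (r + j) % l)) =
      ∑ T ∈ (Finset.range l).powerset, T.card • Gv Cb k l T := by
  have hR : ∀ T ∈ (Finset.range l).powerset, T.card • Gv Cb k l T =
      ∑ p ∈ T, Gv Cb k l T := by
    intro T _
    rw [Finset.sum_const]
  rw [Finset.sum_congr rfl hR, Finset.sum_sigma' (Finset.range l)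
    (fun _ => (Finset.range (l - 1)).powerset)
    (fun j s => Gv Cb k l ((insert (l - 1) s).image (fun r => (r + j) % l))),
    Finset.sum_sigma' ((Finset.range l).powerset) (fun T => T) (fun T _ => Gv Cb k l T)]
  refine Finset.sum_nbij' (fun q => ⟨(insert (l - 1) q.2).image (fun r => (r + q.1) % l),
      (l - 1 + q.1) % l⟩) (fun q => ⟨(q.2 + 1) % l,
      (q.1.erase q.2).image (fun r => (r + (l - (q.2 + 1) % l)) % l)⟩) ?_ ?_ ?_ ?_ ?_
  · rintro ⟨j, s⟩ hq
    simp only [Finset.mem_sigma, Finset.mem_range, Finset.mem_powerset] at hq ⊢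
    obtain ⟨hj, hs⟩ := hq
    refine ⟨fun t ht => ?_, ?_⟩
    · obtain ⟨r, _, rfl⟩ := Finset.mem_image.mp ht
      exact Finset.mem_range.mpr (Nat.mod_lt _ (by omega))
    · exact Finset.mem_image.mpr ⟨l - 1, Finset.mem_insert_self _ _, rfl⟩
  · rintro ⟨T, p⟩ hq
    simp only [Finset.mem_sigma, Finset.mem_range, Finset.mem_powerset] at hq ⊢
    obtain ⟨hT, hp⟩ := hq
    have hpl : p < l := by simpa using hT hp
    refine ⟨Nat.mod_lt _ (by omega), fun t ht => ?_⟩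
    obtain ⟨r, hr, rfl⟩ := Finset.mem_image.mp ht
    have hrT := Finset.mem_of_mem_erase hr
    have hrp : r ≠ p := Finset.ne_of_mem_erase hr
    have hrl : r < l := by simpa using hT hrT
    have hjl : (p + 1) % l ≤ l := le_of_lt (Nat.mod_lt _ (by omega))
    refine Finset.mem_range.mpr ?_
    have hlt : (r + (l - (p + 1) % l)) % l < l := Nat.mod_lt _ (by omega)
    rcases Nat.lt_or_ge ((r + (l - (p + 1) % l)) % l) (l - 1) with h | h
    · exact h
    have heq : (r + (l - (p + 1) % l)) % l = l - 1 := by omega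
    exfalso
    apply hrp
    have := congrArg (fun x => (x + (p + 1) % l) % l) heq
    rw [mod_cancel2 hl hjl hrl] at this
    rw [this, back_mod hl hpl]
  · rintro ⟨j, s⟩ hq
    simp only [Finset.mem_sigma, Finset.mem_range, Finset.mem_powerset] at hq
    obtain ⟨hj, hs⟩ := hq
    have hsl : ∀ r ∈ s, r < l - 1 := fun r hr => by simpa using hs hr
    have hjeq : ((l - 1 + j) % l + 1) % l = j := by
      rw [Nat.mod_add_mod, show l - 1 + j + 1 = j + l from by omega, Nat.add_mod_right,
        Nat.mod_eq_of_lt hj]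
    have himg : ∀ r < l, ((r + j) % l + (l - j)) % l = r :=
      fun r hr => mod_cancel1 hl (le_of_lt hj) hr
    have hnm : (l - 1 + j) % l ∉ s.image (fun r => (r + j) % l) := by
      intro h
      obtain ⟨r, hr, hre⟩ := Finset.mem_image.mp h
      have h1 := himg r (by have := hsl r hr; omega)
      have h2 := himg (l - 1) (by omega)
      rw [hre, h2] at h1
      subst h1
      exact absurd hr (by intro hc; have := hsl _ hc; omega)
    refine Sigma.ext ?_ ?_
    · simp only [hjeq]
    · refine heq_of_eq ?_
      simp only [hjeq]
      rw [Finset.image_insert, Finset.erase_insert hnm, Finset.image_image]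
      refine (Finset.image_congr ?_).trans s.image_id
      intro r hr
      exact himg r (by have := hsl r hr; omega)
  · rintro ⟨T, p⟩ hq
    simp only [Finset.mem_sigma, Finset.mem_range, Finset.mem_powerset] at hq
    obtain ⟨hT, hp⟩ := hq
    have hpl : p < l := by simpa using hT hp
    have hjl : (p + 1) % l ≤ l := le_of_lt (Nat.mod_lt _ (by omega))
    have hback : (l - 1 + (p + 1) % l) % l = p := back_mod hl hpl
    refine Sigma.ext ?_ ?_
    · simp only
      rw [Finset.image_insert, hback, Finset.image_image]
      have h1 : ∀ r ∈ T.erase p,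
          ((fun r => (r + (p + 1) % l) % l) ∘ fun r => (r + (l - (p + 1) % l)) % l) r = r := by
        intro r hr
        have hrl : r < l := by simpa using hT (Finset.mem_of_mem_erase hr)
        exact mod_cancel2 hl hjl hrl
      rw [Finset.image_congr h1]
      rw [show (fun x : ℕ => x) = id from rfl, Finset.image_id, Finset.insert_erase hp]
    · exact heq_of_eq hback
  · rintro ⟨j, s⟩ _
    rfl

lemma step4 :
    ∑ T ∈ (Finset.range l).powerset, T.card • Gv Cb k l T =
      Mn 0 (Cb 0 (prodZ k 0 l)) -
        Mn 0 (Cb 0 (Hx ^ (∑ t ∈ Finset.range l, k t))) := by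
  have hterm : ∀ T ∈ (Finset.range l).powerset, T.card • Gv Cb k l T =
      Mn 0 (Cb 0 (wseg k (TFin T) 0 l)) -
        (if T = ∅ then Mn 0 (Cb 0 (wseg k (TFin (∅ : Finset ℕ)) 0 l)) else 0) := by
    intro T _
    rcases eq_or_ne T ∅ with rfl | hne
    · simp [Gv]
    · rw [if_neg hne, sub_zero, Gv, ← Nat.cast_smul_eq_nsmul ℚ, smul_smul]
      rw [mul_inv_cancel₀ (by
        have := Finset.card_ne_zero_of_mem (Finset.nonempty_iff_ne_empty.mpr hne).choose_spec
        exact_mod_cast Nat.cast_ne_zero.mpr this), one_smul]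
  rw [Finset.sum_congr rfl hterm, Finset.sum_sub_distrib, Finset.sum_ite_eq'
    (Finset.range l).powerset (∅ : Finset ℕ), if_pos (Finset.empty_mem_powerset _)]
  congr 1
  · rw [← map_sum, ← map_sum]
    congr 2
    rw [prodZ_expand]
    exact (Finset.sum_congr rfl fun s _ => rfl).symm
  · rw [wseg_allx k hpos]
    congr 3
    exact Finset.sum_congr rfl fun t _ => by rw [Nat.zero_add]

end Main
end Assembly

/-- For `l ≥ 1` and positive integers `k₁,…,k_l` (indices mod `l`; here `k : ℕ → ℕ`
with period `l`, `0`-indexed):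
`∑_{j=1}^{l} (ρ̄₀ ∘ α ∘ d)(z_{k_j} ⋯ z_{k_{j+l−1}})
  = ∑_{j=1}^{l} ∑_{i=1}^{k_j−1} z_{k_j−i+1} z_{k_{j+1}} ⋯ z_{k_{j+l−1}} z_i
    − (k₁ + ⋯ + k_l) · z_{k₁+⋯+k_l+1}`. -/
theorem rhobar_alpha_d_identity (Cb : ∀ n : ℕ, H →ₗ[ℚ] TensorPower ℚ (n + 2) H)
    (hCb : IsCbar Cb) (am : H →ₗ[ℚ] H) (ha : IsAlpha am) (dm : H →ₗ[ℚ] H) (hd : IsD dm)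
    (l : ℕ) (hl : 1 ≤ l) (k : ℕ → ℕ)
    (hper : ∀ j, k (j + l) = k j) (hpos : ∀ j, 1 ≤ k j) :
    ∑ j ∈ Finset.range l, Mn 0 (Cb 0 (am (dm (zseq k j l)))) =
      (∑ j ∈ Finset.range l, ∑ i ∈ Finset.Icc 1 (k j - 1),
          zw (k j - i + 1) * zseq k (j + 1) (l - 1) * zw i) -
        (∑ j ∈ Finset.range l, k j) • zw ((∑ j ∈ Finset.range l, k j) + 1) := by
  have key : ∀ j ∈ Finset.range l, Mn 0 (Cb 0 (am (dm (zseq k j l)))) =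
      ∑ s ∈ (Finset.range (l - 1)).powerset,
        Gv Cb k l ((insert (l - 1) s).image (fun r => (r + j) % l)) := by
    intro j hj
    rw [step1 Cb hCb k hper hl hpos am ha dm hd j]
    exact Finset.sum_congr rfl fun s hs =>
      step2 Cb hCb k hper hl hpos j (Finset.mem_range.mp hj) s hs
  rw [Finset.sum_congr rfl key, step3 Cb hCb k hper hl hpos, step4 Cb hCb k hper hl hpos,
    rho_xpow Cb hCb, psi_rho Cb hCb, psi_prodZ Cb hCb k 1 1 0 l]
  congr 1
  symm
  refine Finset.sum_congr rfl fun j hj => ?_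
  have hjl : j < l := Finset.mem_range.mp hj
  have hmid : zseq k (j + 1) (l - 1) = zseq k (0 + j + 1) (l - 1 - j) * zseq k 0 j := by
    conv_lhs => rw [show l - 1 = (l - 1 - j) + j from by omega]
    rw [zseq_add, Nat.zero_add, show j + 1 + (l - 1 - j) = 0 + l from by omega,
      zseq_period k hper]
  rw [show Finset.Icc 1 (k j - 1) = Finset.Ico 1 (k j) from by
      rw [← Finset.Ico_add_one_right_eq_Icc, show k j - 1 + 1 = k j from by have := hpos j; omega],
    Finset.sum_Ico_eq_sum_range,
    show k j - 1 = k (0 + j) - 1 from by rw [Nat.zero_add]]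
  refine Finset.sum_congr rfl fun i hi => ?_
  rw [hmid]
  simp only [zw, Nat.zero_add, one_mul,
    show k j - (1 + i) + 1 - 1 = k j - 1 - i from by omega,
    show 1 + i - 1 = i from by omega, mul_assoc]
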